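/- Let α > 1, σ > 0, let p be a positive integer, and let μ₁, μ₂ ∈ ℝ^p. The Rényi divergence of order α between the multivariate Gaussian measures N(μ₁, σ²·I_p) and N(μ₂, σ²·I_p) (with identity covariance scaled by σ²) equals α·‖μ₁ - μ₂‖₂²/(2σ²). Consequently, for any function f : 𝒟 → ℝ^p with ℓ₂-sensitivity Δ₂f = max over adjacent D, D' of ‖f(D) - f(D')‖₂, the Gaussian mechanism M_σ(D) = N(f(D), σ²·I_p) satisfies (α, α·(Δ₂f)²/(2σ²))-Rényi differential privacy. -/

import Mathlib

open MeasureTheory ProbabilityTheory ENNReal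

open Classical in
/-- The Rényi divergence of order `α` between two measures: `(α-1)⁻¹ log ∫ (dP/dQ)^α dQ`
when `P ≪ Q`, and `⊤` otherwise. -/
noncomputable def renyiDiv {X : Type*} [MeasurableSpace X] (α : ℝ) (P Q : Measure X) : EReal :=
  if P ≪ Q then ((α - 1)⁻¹ : ℝ) * ENNReal.log (∫⁻ x, (P.rnDeriv Q x) ^ α ∂Q) else ⊤
/-- The Gaussian measure `N(μ, v·I_p)` on `ℝ^p` with mean `μ` and covariance `v` times the
identity, realized as a product of one-dimensional Gaussians. -/
noncomputable def gaussianPi {p : ℕ} (μ : Fin p → ℝ) (v : NNReal) : Measure (Fin p → ℝ) :=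
  Measure.pi fun i => gaussianReal (μ i) v

lemma lintegral_pi_prod' : ∀ (p : ℕ) (h : Fin p → ℝ → ℝ≥0∞), (∀ i, Measurable (h i)) →
    ∫⁻ x : Fin p → ℝ, ∏ i, h i (x i) ∂(Measure.pi fun _ => (volume : Measure ℝ))
      = ∏ i, ∫⁻ t, h i t := by
  intro p
  induction p with
  | zero =>
    intro h _
    simp [Measure.pi_empty_univ]
  | succ n ih =>
    intro h hm
    rw [← ((measurePreserving_piFinSuccAbove (fun _ : Fin (n+1) => (volume : Measure ℝ))
      0).symm).lintegral_comp_emb (MeasurableEquiv.measurableEmbedding _)]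
    simp_rw [MeasurableEquiv.piFinSuccAbove_symm_apply, Fin.insertNthEquiv,
      Fin.prod_univ_succ, Fin.insertNth_zero]
    simp only [Fin.zero_succAbove, Fin.cons_zero, Fin.cons_succ, Equiv.coe_fn_mk, cast_eq]
    rw [lintegral_prod_mul (f := h 0) (g := fun b : Fin n → ℝ => ∏ j : Fin n, h j.succ (b j))
      (hm 0).aemeasurable (Measurable.aemeasurable (by measurability))]
    rw [ih (fun j => h j.succ) (fun j => hm j.succ)]

lemma gaussianPi_eq_withDensity {p : ℕ} (μ : Fin p → ℝ) {v : NNReal} (hv : v ≠ 0) :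
    gaussianPi μ v = (Measure.pi fun _ => (volume : Measure ℝ)).withDensity
      (fun x => ENNReal.ofReal (∏ i, gaussianPDFReal (μ i) v (x i))) := by
  have hofReal : ∀ x : Fin p → ℝ, ENNReal.ofReal (∏ i, gaussianPDFReal (μ i) v (x i))
      = ∏ i, gaussianPDF (μ i) v (x i) := fun x =>
    ENNReal.ofReal_prod_of_nonneg fun i _ => gaussianPDFReal_nonneg _ _ _
  simp_rw [hofReal]
  refine Measure.pi_eq fun s hs => ?_
  rw [withDensity_apply _ (MeasurableSet.univ_pi hs), ← lintegral_indicator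
    (MeasurableSet.univ_pi hs)]
  have : ∀ x : Fin p → ℝ, (Set.pi Set.univ s).indicator
      (fun x => ∏ i, gaussianPDF (μ i) v (x i)) x
        = ∏ i, (s i).indicator (gaussianPDF (μ i) v) (x i) := by
    intro x
    by_cases hx : x ∈ Set.pi Set.univ s
    · rw [Set.indicator_of_mem hx]
      exact Finset.prod_congr rfl fun i _ =>
        (Set.indicator_of_mem (hx i (Set.mem_univ i)) _).symm
    · rw [Set.indicator_of_notMem hx]
      rw [Set.mem_univ_pi] at hx
      push_neg at hx
      obtain ⟨i, hi⟩ := hx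
      exact (Finset.prod_eq_zero (Finset.mem_univ i)
        (Set.indicator_of_notMem hi _)).symm
  simp_rw [this]
  rw [lintegral_pi_prod' p _ fun i => (measurable_gaussianPDF _ _).indicator (hs i)]
  exact Finset.prod_congr rfl fun i _ => by
    rw [lintegral_indicator (hs i), ← gaussianReal_apply _ hv]

open Real in
lemma gauss_mul_ratio_rpow (α : ℝ) {v : NNReal} (hv : v ≠ 0) (m₁ m₂ t : ℝ) :
    gaussianPDFReal m₂ v t * (gaussianPDFReal m₁ v t / gaussianPDFReal m₂ v t) ^ α
      = Real.exp (α * (α - 1) * (m₁ - m₂) ^ 2 / (2 * v)) *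
        gaussianPDFReal (α * m₁ + (1 - α) * m₂) v t := by
  have hv' : (0:ℝ) < (v:ℝ) := lt_of_le_of_ne v.coe_nonneg (by exact_mod_cast hv.symm)
  have hs : (0:ℝ) < Real.sqrt (2 * π * v) := Real.sqrt_pos.mpr (by positivity)
  simp only [gaussianPDFReal]
  rw [mul_div_mul_left _ _ (inv_ne_zero hs.ne'), ← Real.exp_sub,
    Real.rpow_def_of_pos (Real.exp_pos _), Real.log_exp]
  conv_lhs => rw [mul_assoc, ← Real.exp_add]
  conv_rhs => rw [mul_comm, mul_assoc, ← Real.exp_add]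
  congr 1
  field_simp
  ring

lemma renyiDiv_gaussianPi_eq (α : ℝ) (hα : 1 < α) {v : NNReal} (hv : v ≠ 0)
    {p : ℕ} (μ₁ μ₂ : Fin p → ℝ) :
    renyiDiv α (gaussianPi μ₁ v) (gaussianPi μ₂ v)
      = ((α * (∑ i, (μ₁ i - μ₂ i) ^ 2) / (2 * v) : ℝ) : EReal) := by
  have hv' : (0:ℝ) < (v:ℝ) := lt_of_le_of_ne v.coe_nonneg (by exact_mod_cast hv.symm)
  set volpi := (Measure.pi fun _ : Fin p => (volume : Measure ℝ)) with hvolpi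
  set Fr : (Fin p → ℝ) → ℝ := fun x => ∏ i, gaussianPDFReal (μ₁ i) v (x i) with hFr
  set Gr : (Fin p → ℝ) → ℝ := fun x => ∏ i, gaussianPDFReal (μ₂ i) v (x i) with hGr
  have hFrpos : ∀ x, 0 < Fr x := fun x =>
    Finset.prod_pos fun i _ => gaussianPDFReal_pos _ _ _ hv
  have hGrpos : ∀ x, 0 < Gr x := fun x =>
    Finset.prod_pos fun i _ => gaussianPDFReal_pos _ _ _ hv
  have hFrm : Measurable Fr := Finset.measurable_prod _ fun i _ =>
    (measurable_gaussianPDFReal _ _).comp (measurable_pi_apply i)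
  have hGrm : Measurable Gr := Finset.measurable_prod _ fun i _ =>
    (measurable_gaussianPDFReal _ _).comp (measurable_pi_apply i)
  set F : (Fin p → ℝ) → ℝ≥0∞ := fun x => ENNReal.ofReal (Fr x) with hF
  set G : (Fin p → ℝ) → ℝ≥0∞ := fun x => ENNReal.ofReal (Gr x) with hG
  have hFm : Measurable F := hFrm.ennreal_ofReal
  have hGm : Measurable G := hGrm.ennreal_ofReal
  have hP : gaussianPi μ₁ v = volpi.withDensity F := gaussianPi_eq_withDensity μ₁ hv
  have hQ : gaussianPi μ₂ v = volpi.withDensity G := gaussianPi_eq_withDensity μ₂ hv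
  have hGne0 : ∀ x, G x ≠ 0 := fun x => by
    simp only [hG, ne_eq, ENNReal.ofReal_eq_zero, not_le]; exact hGrpos x
  have hGneTop : ∀ x, G x ≠ ∞ := fun x => ENNReal.ofReal_ne_top
  have hac : gaussianPi μ₁ v ≪ gaussianPi μ₂ v := by
    rw [hP, hQ]
    exact (withDensity_absolutelyContinuous _ _).trans
      (withDensity_absolutelyContinuous' hGm.aemeasurable (ae_of_all _ hGne0))
  haveI : IsProbabilityMeasure (gaussianPi μ₁ v) := by
    rw [gaussianPi]; infer_instance
  haveI : SigmaFinite (volpi.withDensity F) := by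
    rw [← hP]; infer_instance
  have hrn : (gaussianPi μ₁ v).rnDeriv (gaussianPi μ₂ v)
      =ᵐ[volpi] fun x => (G x)⁻¹ * F x := by
    rw [hP, hQ]
    have h1 := Measure.rnDeriv_withDensity_right (volpi.withDensity F) volpi
      hGm.aemeasurable (ae_of_all _ hGne0) (ae_of_all _ hGneTop)
    have h2 := Measure.rnDeriv_withDensity volpi hFm
    filter_upwards [h1, h2] with x hx1 hx2
    rw [hx1, hx2]
  -- the lintegral
  have key : ∫⁻ x, ((gaussianPi μ₁ v).rnDeriv (gaussianPi μ₂ v) x) ^ α ∂(gaussianPi μ₂ v)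
      = ENNReal.ofReal (Real.exp (α * (α - 1) * (∑ i, (μ₁ i - μ₂ i) ^ 2) / (2 * v))) := by
    rw [hQ, lintegral_withDensity_eq_lintegral_mul volpi hGm
      ((Measure.measurable_rnDeriv _ _).pow measurable_const), ← hQ]
    simp only [Pi.mul_apply]
    have step1 : (fun x => G x * ((gaussianPi μ₁ v).rnDeriv (gaussianPi μ₂ v) x) ^ α)
        =ᵐ[volpi] fun x => ∏ i, ENNReal.ofReal (gaussianPDFReal (μ₂ i) v (x i) *
          (gaussianPDFReal (μ₁ i) v (x i) / gaussianPDFReal (μ₂ i) v (x i)) ^ α) := by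
      filter_upwards [hrn] with x hx
      rw [hx]
      rw [hG, ← ENNReal.ofReal_inv_of_pos (hGrpos x), ← ENNReal.ofReal_mul
        (inv_nonneg.mpr (hGrpos x).le), ENNReal.ofReal_rpow_of_pos
        (mul_pos (inv_pos.mpr (hGrpos x)) (hFrpos x)), ← ENNReal.ofReal_mul (hGrpos x).le]
      rw [← ENNReal.ofReal_prod_of_nonneg (fun i _ => mul_nonneg
        (gaussianPDFReal_nonneg _ _ _) (Real.rpow_nonneg (div_nonneg
          (gaussianPDFReal_nonneg _ _ _) (gaussianPDFReal_nonneg _ _ _)) _))]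
      congr 1
      rw [inv_mul_eq_div, hFr, hGr, ← Finset.prod_div_distrib,
        ← Real.finset_prod_rpow _ _ (fun i _ => div_nonneg (gaussianPDFReal_nonneg _ _ _)
          (gaussianPDFReal_nonneg _ _ _)) α, ← Finset.prod_mul_distrib]
    rw [lintegral_congr_ae step1]
    rw [lintegral_pi_prod' p (fun i t => ENNReal.ofReal (gaussianPDFReal (μ₂ i) v t *
      (gaussianPDFReal (μ₁ i) v t / gaussianPDFReal (μ₂ i) v t) ^ α))
      (fun i => (((measurable_gaussianPDFReal _ _).mul
      (((measurable_gaussianPDFReal _ _).div (measurable_gaussianPDFReal _ _)).pow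
        measurable_const)).ennreal_ofReal))]
    have one_dim : ∀ i : Fin p, ∫⁻ t, ENNReal.ofReal (gaussianPDFReal (μ₂ i) v t *
        (gaussianPDFReal (μ₁ i) v t / gaussianPDFReal (μ₂ i) v t) ^ α)
          = ENNReal.ofReal (Real.exp (α * (α - 1) * (μ₁ i - μ₂ i) ^ 2 / (2 * v))) := by
      intro i
      simp_rw [gauss_mul_ratio_rpow α hv (μ₁ i) (μ₂ i)]
      simp_rw [ENNReal.ofReal_mul (Real.exp_nonneg _)]
      rw [lintegral_const_mul _ (measurable_gaussianPDFReal _ _).ennreal_ofReal,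
        lintegral_gaussianPDFReal_eq_one _ hv, mul_one]
    simp_rw [one_dim]
    rw [← ENNReal.ofReal_prod_of_nonneg (fun i _ => Real.exp_nonneg _), ← Real.exp_sum]
    congr 2
    rw [← Finset.sum_div, ← Finset.mul_sum]
  rw [renyiDiv, if_pos hac, key, ENNReal.log_ofReal_of_pos (Real.exp_pos _), Real.log_exp]
  rw [← EReal.coe_mul]
  congr 1
  have hα1 : α - 1 ≠ 0 := sub_ne_zero.mpr hα.ne'
  have hrearrange : α * (α - 1) * (∑ i, (μ₁ i - μ₂ i) ^ 2) / (2 * (v:ℝ))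
      = (α - 1) * (α * (∑ i, (μ₁ i - μ₂ i) ^ 2) / (2 * (v:ℝ))) := by ring
  rw [hrearrange, inv_mul_cancel_left₀ hα1]

/-- The Rényi divergence of order `α > 1` between the multivariate Gaussian measures
`N(μ₁, σ²·I_p)` and `N(μ₂, σ²·I_p)` equals `α ‖μ₁ - μ₂‖₂² / (2σ²)`. Consequently, the Gaussian
mechanism `M_σ(D) = N(f(D), σ²·I_p)` applied to a function `f` of ℓ₂-sensitivity at most `Δ`
satisfies `(α, α Δ² / (2σ²))`-Rényi differential privacy. -/
theorem renyiDiv_gaussianPi (α σ : ℝ) (hα : 1 < α) (hσ : 0 < σ)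
    {p : ℕ} (hp : 0 < p) (μ₁ μ₂ : Fin p → ℝ)
    {𝒟 : Type*} (Adj : 𝒟 → 𝒟 → Prop) (f : 𝒟 → Fin p → ℝ) (Δ : ℝ)
    (hΔ : ∀ D D', Adj D D' → Real.sqrt (∑ i, (f D i - f D' i) ^ 2) ≤ Δ) :
    renyiDiv α (gaussianPi μ₁ ⟨σ ^ 2, sq_nonneg σ⟩) (gaussianPi μ₂ ⟨σ ^ 2, sq_nonneg σ⟩)
      = ((α * (∑ i, (μ₁ i - μ₂ i) ^ 2) / (2 * σ ^ 2) : ℝ) : EReal) ∧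
      ∀ D D', Adj D D' →
        renyiDiv α (gaussianPi (f D) ⟨σ ^ 2, sq_nonneg σ⟩)
            (gaussianPi (f D') ⟨σ ^ 2, sq_nonneg σ⟩)
          ≤ ((α * Δ ^ 2 / (2 * σ ^ 2) : ℝ) : EReal) := by
  have hv : (⟨σ ^ 2, sq_nonneg σ⟩ : NNReal) ≠ 0 := by
    intro h
    have := congrArg NNReal.toReal h
    change (σ ^ 2 : ℝ) = 0 at this
    exact pow_ne_zero 2 hσ.ne' this
  constructor
  · exact renyiDiv_gaussianPi_eq α hα hv μ₁ μ₂
  · intro D D' hDD'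
    refine le_trans (le_of_eq (renyiDiv_gaussianPi_eq α hα hv (f D) (f D'))) ?_
    rw [EReal.coe_le_coe_iff]
    show α * (∑ i, (f D i - f D' i) ^ 2) / (2 * σ ^ 2) ≤ α * Δ ^ 2 / (2 * σ ^ 2)
    have hsum : (∑ i, (f D i - f D' i) ^ 2) ≤ Δ ^ 2 := by
      have h1 := hΔ D D' hDD'
      have h2 : (0:ℝ) ≤ ∑ i, (f D i - f D' i) ^ 2 :=
        Finset.sum_nonneg fun i _ => sq_nonneg _
      calc (∑ i, (f D i - f D' i) ^ 2)
          = Real.sqrt (∑ i, (f D i - f D' i) ^ 2) ^ 2 := (Real.sq_sqrt h2).symm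
        _ ≤ Δ ^ 2 := by
            have := Real.sqrt_nonneg (∑ i, (f D i - f D' i) ^ 2)
            nlinarith
    have hα0 : (0:ℝ) ≤ α := by linarith
    have hden : (0:ℝ) < 2 * σ ^ 2 := by positivity
    gcongr
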